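/- Fix t > 0 and let μ_t(z) = (1/(πt)) e^{-|z|²/t} for z ∈ ℂ. Then for every entire holomorphic function f : ℂ → ℂ with ∫_ℂ |f(ω)|² μ_t(ω) dω < ∞, and for every z ∈ ℂ, one has |f(z)|² ≤ e^{|z|²/t} · ∫_ℂ |f(ω)|² μ_t(ω) dω. -/

import Mathlib

open MeasureTheory Metric Complex Set Filter
open scoped Real ENNReal



theorem lintegral_comp_polarCoord_symm_aux (g : ℝ × ℝ → ℝ≥0∞) :
    (∫⁻ p in polarCoord.target, ENNReal.ofReal p.1 * g (polarCoord.symm p)) = ∫⁻ p, g p := by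
  set B : ℝ × ℝ → ℝ × ℝ →L[ℝ] ℝ × ℝ := fun p =>
    LinearMap.toContinuousLinearMap (Matrix.toLin (Module.Basis.finTwoProd ℝ) (Module.Basis.finTwoProd ℝ)
      !![Real.cos p.2, -p.1 * Real.sin p.2; Real.sin p.2, p.1 * Real.cos p.2])
  have A : ∀ p ∈ polarCoord.target, HasFDerivWithinAt polarCoord.symm (B p) polarCoord.target p :=
    fun p _ => (hasFDerivAt_polarCoord_symm p).hasFDerivWithinAt
  have B_det : ∀ p, (B p).det = p.1 := by
    intro p
    conv_rhs => rw [← one_mul p.1, ← Real.cos_sq_add_sin_sq p.2]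
    simp only [B, neg_mul, LinearMap.det_toContinuousLinearMap, LinearMap.det_toLin,
      Matrix.det_fin_two_of, sub_neg_eq_add]
    ring
  have inj : Set.InjOn polarCoord.symm polarCoord.target := polarCoord.symm.injOn
  have img : polarCoord.symm '' polarCoord.target = polarCoord.source :=
    polarCoord.toPartialEquiv.symm_image_target_eq_source
  symm
  calc
    ∫⁻ p, g p = ∫⁻ p in polarCoord.source, g p := by
      rw [← setLIntegral_univ]
      exact setLIntegral_congr polarCoord_source_ae_eq_univ.symm
    _ = ∫⁻ p in polarCoord.target, ENNReal.ofReal |(B p).det| * g (polarCoord.symm p) := by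
      rw [← img]
      exact lintegral_image_eq_lintegral_abs_det_fderiv_mul volume
        polarCoord.open_target.measurableSet A inj g
    _ = _ := by
      refine setLIntegral_congr_fun_ae polarCoord.open_target.measurableSet (ae_of_all _ ?_)
      intro p hp
      rw [B_det, abs_of_pos hp.1]

theorem Complex.lintegral_comp_polarCoord_symm_aux (g : ℂ → ℝ≥0∞) (hg : Measurable g) :
    (∫⁻ p in polarCoord.target, ENNReal.ofReal p.1 * g (Complex.polarCoord.symm p)) = ∫⁻ z, g z := by
  rw [← (Complex.volume_preserving_equiv_real_prod.symm).lintegral_comp hg,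
    ← _root_.lintegral_comp_polarCoord_symm_aux]
  rfl



theorem gauss_radial {t : ℝ} (ht : 0 < t) :
    ∫ r in Ioi (0:ℝ), r * Real.exp (-r ^ 2 / t) = t / 2 := by
  have hderiv : ∀ x ∈ Ici (0:ℝ), HasDerivAt (fun x : ℝ => -(t/2) * Real.exp (-x ^ 2 / t))
      (x * Real.exp (-x ^ 2 / t)) x := by
    intro x _
    have h1 : HasDerivAt (fun x : ℝ => -x ^ 2 / t) (-(2 * x) / t) x := by
      simpa using ((hasDerivAt_pow 2 x).neg.div_const t)
    have := (h1.exp).const_mul (-(t/2))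
    refine this.congr_deriv ?_
    field_simp
  have hint : IntegrableOn (fun x : ℝ => x * Real.exp (-x ^ 2 / t)) (Ioi 0) := by
    have := (integrable_mul_exp_neg_mul_sq (b := 1/t) (by positivity)).integrableOn
      (s := Ioi (0:ℝ))
    convert this using 2 with x
    congr 1
    field_simp
  have htend : Tendsto (fun x : ℝ => -(t/2) * Real.exp (-x ^ 2 / t)) atTop (nhds 0) := by
    have h1 : Tendsto (fun x : ℝ => x ^ 2 / t) atTop atTop :=
      (tendsto_pow_atTop two_ne_zero).atTop_div_const ht
    have h2 : Tendsto (fun x : ℝ => -x ^ 2 / t) atTop atBot := by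
      simp only [neg_div]
      exact tendsto_neg_atTop_atBot.comp h1
    have h3 : Tendsto (fun x : ℝ => Real.exp (-x ^ 2 / t)) atTop (nhds 0) :=
      Real.tendsto_exp_atBot.comp h2
    simpa using h3.const_mul (-(t/2))
  have := integral_Ioi_of_hasDerivAt_of_tendsto' (fun x hx => hderiv x hx) hint htend
  rw [this]
  simp



theorem circle_mean_le (h : ℂ → ℂ) (hd : Differentiable ℂ h) (c : ℂ) {r : ℝ} (hr : 0 < r) :
    2 * Real.pi * ‖h c‖ ≤ ∫ θ in (0:ℝ)..(2 * Real.pi), ‖h (circleMap c r θ)‖ := by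
  have hcauchy : (∮ ζ in C(c, r), (ζ - c)⁻¹ • h ζ) = (2 * Real.pi * I) • h c :=
    (hd.diffContOnCl).circleIntegral_sub_inv_smul (mem_ball_self hr)
  have h0 : ∀ θ : ℝ, circleMap 0 r θ ≠ 0 := fun θ => by
    simpa using circleMap_ne_center (c := (0:ℂ)) hr.ne' (θ := θ)
  have hintegrand : ∀ θ : ℝ, deriv (circleMap c r) θ * ((circleMap c r θ - c)⁻¹ * h (circleMap c r θ))
      = I * h (circleMap c r θ) := by
    intro θ
    rw [deriv_circleMap, circleMap_sub_center]
    field_simp [h0 θ]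
  have key : (2 * (Real.pi:ℂ) * I) * h c = I * ∫ θ in (0:ℝ)..(2 * Real.pi), h (circleMap c r θ) := by
    have hc2 := hcauchy
    simp only [circleIntegral, smul_eq_mul, hintegrand] at hc2
    rw [← intervalIntegral.integral_const_mul]
    exact hc2.symm
  have key2 : (2 * (Real.pi:ℂ)) * h c = ∫ θ in (0:ℝ)..(2 * Real.pi), h (circleMap c r θ) := by
    apply mul_left_cancel₀ I_ne_zero
    rw [← key]; ring
  have hnorm : ‖(2 * (Real.pi:ℂ)) * h c‖ = 2 * Real.pi * ‖h c‖ := by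
    rw [norm_mul]
    norm_num [Real.pi_pos.le]
  calc 2 * Real.pi * ‖h c‖ = ‖∫ θ in (0:ℝ)..(2 * Real.pi), h (circleMap c r θ)‖ := by
        rw [← key2, hnorm]
    _ ≤ ∫ θ in (0:ℝ)..(2 * Real.pi), ‖h (circleMap c r θ)‖ :=
        intervalIntegral.norm_integral_le_integral_norm (by positivity)

theorem radial_bound (t : ℝ) (ht : 0 < t) (f : ℂ → ℂ) (hf : Differentiable ℂ f) (z : ℂ)
    {r : ℝ} (hr : 0 < r) :
    2 / t * Real.exp (-r ^ 2 / t) * Real.exp (-(‖z‖ ^ 2) / t) * ‖f z‖ ^ 2 ≤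
      ∫ θ in Ioo (-Real.pi) Real.pi, ‖f (circleMap z r θ)‖ ^ 2 *
        (1 / (Real.pi * t) * Real.exp (-(‖circleMap z r θ‖ ^ 2) / t)) := by
  set g : ℂ → ℂ := fun ω => f ω * Complex.exp (-(ω * (starRingEnd ℂ z)) / t) with hgdef
  have hgd : Differentiable ℂ fun ω => (g ω) ^ 2 := by
    apply Differentiable.pow
    apply hf.mul
    apply Complex.differentiable_exp.comp
    exact (differentiable_id.mul_const _).neg.div_const _
  have hmean := circle_mean_le _ hgd z hr
  have hnorm : ∀ ω : ℂ, ‖(g ω) ^ 2‖ =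
      ‖f ω‖ ^ 2 * Real.exp (-2 * (ω * (starRingEnd ℂ z)).re / t) := by
    intro ω
    rw [norm_pow, hgdef]
    simp only [norm_mul, Complex.norm_exp]
    rw [mul_pow, pow_two (Real.exp _), ← Real.exp_add]
    congr 2
    simp only [Complex.div_ofReal_re, Complex.neg_re]
    ring
  have hcenter : ‖(g z) ^ 2‖ = ‖f z‖ ^ 2 * Real.exp (-2 * ‖z‖ ^ 2 / t) := by
    rw [hnorm z, Complex.mul_conj, Complex.ofReal_re, Complex.normSq_eq_norm_sq]
  have hrad : ∀ θ : ℝ, Complex.normSq (circleMap z r θ - z) = r ^ 2 := by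
    intro θ
    rw [circleMap_sub_center, ← Complex.sq_norm, norm_circleMap_zero, _root_.sq_abs]
  have hcirc : ∀ θ : ℝ, ‖(g (circleMap z r θ)) ^ 2‖ = ‖f (circleMap z r θ)‖ ^ 2 *
      Real.exp (-(‖circleMap z r θ‖ ^ 2 + ‖z‖ ^ 2 - r ^ 2) / t) := by
    intro θ
    rw [hnorm]
    congr 2
    have h1 := Complex.normSq_sub (circleMap z r θ) z
    have h2 := hrad θ
    have h3 : -2 * (circleMap z r θ * (starRingEnd ℂ z)).re =
        -(‖circleMap z r θ‖ ^ 2 + ‖z‖ ^ 2 - r ^ 2) := by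
      rw [Complex.sq_norm, Complex.sq_norm]
      linarith
    rw [h3]
  set s := ‖z‖ ^ 2 with hs
  set C := 1 / (Real.pi * t) * Real.exp ((s - r ^ 2) / t) with hC
  have hCpos : 0 < C := by positivity
  have e1 : Real.exp (-r ^ 2 / t) * Real.exp (-s / t) = Real.exp ((-r ^ 2 - s) / t) := by
    rw [← Real.exp_add]; congr 1; ring
  have e2 : Real.exp ((s - r ^ 2) / t) * Real.exp (-2 * s / t) = Real.exp ((-r ^ 2 - s) / t) := by
    rw [← Real.exp_add]; congr 1; ring
  have hπ : Real.pi ≠ 0 := Real.pi_ne_zero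
  calc 2 / t * Real.exp (-r ^ 2 / t) * Real.exp (-s / t) * ‖f z‖ ^ 2
      = C * (2 * Real.pi * ‖(g z) ^ 2‖) := by
        have key : C * (2 * Real.pi) = 2 / t * Real.exp ((s - r ^ 2) / t) := by
          rw [hC]; field_simp
        rw [hcenter, show C * (2 * Real.pi * (‖f z‖ ^ 2 * Real.exp (-2 * s / t))) =
          C * (2 * Real.pi) * ‖f z‖ ^ 2 * Real.exp (-2 * s / t) from by ring, key]
        linear_combination (2 / t * ‖f z‖ ^ 2) * e1 - (2 / t * ‖f z‖ ^ 2) * e2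
    _ ≤ C * ∫ θ in (0:ℝ)..(2 * Real.pi), ‖(g (circleMap z r θ)) ^ 2‖ :=
        mul_le_mul_of_nonneg_left hmean hCpos.le
    _ = ∫ θ in (0:ℝ)..(2 * Real.pi), ‖f (circleMap z r θ)‖ ^ 2 *
        (1 / (Real.pi * t) * Real.exp (-(‖circleMap z r θ‖ ^ 2) / t)) := by
        rw [← intervalIntegral.integral_const_mul]
        apply intervalIntegral.integral_congr
        intro θ _
        dsimp only
        rw [hcirc θ, hC]
        have e3 : Real.exp ((s - r ^ 2) / t) *
            Real.exp (-(‖circleMap z r θ‖ ^ 2 + s - r ^ 2) / t) =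
            Real.exp (-(‖circleMap z r θ‖ ^ 2) / t) := by
          rw [← Real.exp_add]; congr 1; ring
        linear_combination (‖f (circleMap z r θ)‖ ^ 2 * (1 / (Real.pi * t))) * e3
    _ = ∫ θ in (-Real.pi)..Real.pi, ‖f (circleMap z r θ)‖ ^ 2 *
        (1 / (Real.pi * t) * Real.exp (-(‖circleMap z r θ‖ ^ 2) / t)) := by
        have hper : Function.Periodic (fun θ : ℝ => ‖f (circleMap z r θ)‖ ^ 2 *
            (1 / (Real.pi * t) * Real.exp (-(‖circleMap z r θ‖ ^ 2) / t)))
            (2 * Real.pi) :=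
          (periodic_circleMap z r).comp fun ω => ‖f ω‖ ^ 2 *
            (1 / (Real.pi * t) * Real.exp (-(‖ω‖ ^ 2) / t))
        have := hper.intervalIntegral_add_eq 0 (-Real.pi)
        simp only [zero_add] at this
        rw [this, show -Real.pi + 2 * Real.pi = Real.pi from by ring]
    _ = ∫ θ in Ioo (-Real.pi) Real.pi, ‖f (circleMap z r θ)‖ ^ 2 *
        (1 / (Real.pi * t) * Real.exp (-(‖circleMap z r θ‖ ^ 2) / t)) := by
        rw [intervalIntegral.integral_of_le (by linarith [Real.pi_pos]),
          ← integral_Ioc_eq_integral_Ioo]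


/-- Bargmann's pointwise bound for the Segal-Bargmann space `HL²(ℂ, μ_t)`. -/
theorem segal_bargmann_pointwise_bound (t : ℝ) (ht : 0 < t)
    (f : ℂ → ℂ) (hf : Differentiable ℂ f)
    (hint : Integrable fun ω =>
      ‖f ω‖ ^ 2 * (1 / (Real.pi * t) * Real.exp (-(‖ω‖ ^ 2) / t)))
    (z : ℂ) :
    ‖f z‖ ^ 2 ≤ Real.exp (‖z‖ ^ 2 / t) *
      ∫ ω, ‖f ω‖ ^ 2 * (1 / (Real.pi * t) * Real.exp (-(‖ω‖ ^ 2) / t)) := by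
  set H : ℂ → ℝ := fun ω =>
    ‖f ω‖ ^ 2 * (1 / (Real.pi * t) * Real.exp (-(‖ω‖ ^ 2) / t)) with hH
  have hHnn : ∀ ω, 0 ≤ H ω := fun ω => by rw [hH]; positivity
  have hHcont : Continuous H := by
    rw [hH]
    exact ((hf.continuous.norm).pow 2).mul (continuous_const.mul
      (Real.continuous_exp.comp (((continuous_norm.pow 2).neg).div_const t)))
  have hcm : ∀ p : ℝ × ℝ, z + Complex.polarCoord.symm p = circleMap z p.1 p.2 := by
    intro p
    rw [Complex.polarCoord_symm_apply, circleMap, Complex.exp_mul_I]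
    push_cast
    ring
  have hcmcont : Continuous fun p : ℝ × ℝ => circleMap z p.1 p.2 := by
    unfold circleMap
    fun_prop
  have hmeas : Measurable fun ω : ℂ => ENNReal.ofReal (H (z + ω)) :=
    ((hHcont.comp (continuous_const.add continuous_id)).measurable).ennreal_ofReal
  have hmeas2 : Measurable fun p : ℝ × ℝ =>
      ENNReal.ofReal p.1 * ENNReal.ofReal (H (circleMap z p.1 p.2)) :=
    (measurable_fst.ennreal_ofReal).mul
      ((hHcont.comp hcmcont).measurable.ennreal_ofReal)
  have step1 : (∫⁻ ω, ENNReal.ofReal (H ω)) =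
      ∫⁻ p in polarCoord.target, ENNReal.ofReal p.1 *
        ENNReal.ofReal (H (circleMap z p.1 p.2)) := by
    rw [← lintegral_add_left_eq_self (fun ω => ENNReal.ofReal (H ω)) z,
      ← Complex.lintegral_comp_polarCoord_symm_aux _ hmeas]
    refine setLIntegral_congr_fun_ae polarCoord.open_target.measurableSet (ae_of_all _ ?_)
    intro p _
    rw [hcm p]
  have step2 : (∫⁻ p in polarCoord.target, ENNReal.ofReal p.1 *
        ENNReal.ofReal (H (circleMap z p.1 p.2))) =
      ∫⁻ r in Set.Ioi (0:ℝ), ∫⁻ θ in Set.Ioo (-Real.pi) Real.pi,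
        ENNReal.ofReal r * ENNReal.ofReal (H (circleMap z r θ)) := by
    have htarget : polarCoord.target = Set.Ioi (0:ℝ) ×ˢ Set.Ioo (-Real.pi) Real.pi := rfl
    rw [htarget, Measure.volume_eq_prod, ← Measure.prod_restrict]
    exact lintegral_prod _ hmeas2.aemeasurable
  have inner_bound : ∀ r ∈ Set.Ioi (0:ℝ),
      ENNReal.ofReal (‖f z‖ ^ 2 * Real.exp (-(‖z‖ ^ 2) / t) *
        (2 / t * r * Real.exp (-r ^ 2 / t))) ≤
      ∫⁻ θ in Set.Ioo (-Real.pi) Real.pi,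
        ENNReal.ofReal r * ENNReal.ofReal (H (circleMap z r θ)) := by
    intro r hr
    rw [lintegral_const_mul' _ _ ENNReal.ofReal_ne_top]
    have hInt : IntegrableOn (fun θ => H (circleMap z r θ))
        (Set.Ioo (-Real.pi) Real.pi) := by
      have hc : Continuous fun θ => H (circleMap z r θ) :=
        hHcont.comp (continuous_circleMap z r)
      exact (hc.integrableOn_Icc).mono_set Set.Ioo_subset_Icc_self
    rw [← ofReal_integral_eq_lintegral_ofReal hInt (ae_of_all _ fun θ => hHnn _)]
    calc ENNReal.ofReal (‖f z‖ ^ 2 * Real.exp (-(‖z‖ ^ 2) / t) *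
          (2 / t * r * Real.exp (-r ^ 2 / t)))
        = ENNReal.ofReal (r * (2 / t * Real.exp (-r ^ 2 / t) *
            Real.exp (-(‖z‖ ^ 2) / t) * ‖f z‖ ^ 2)) := by
          congr 1; ring
      _ = ENNReal.ofReal r * ENNReal.ofReal (2 / t * Real.exp (-r ^ 2 / t) *
            Real.exp (-(‖z‖ ^ 2) / t) * ‖f z‖ ^ 2) :=
          ENNReal.ofReal_mul (le_of_lt hr)
      _ ≤ ENNReal.ofReal r * ENNReal.ofReal (∫ θ in Set.Ioo (-Real.pi) Real.pi,
            H (circleMap z r θ)) :=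
          mul_le_mul_right (ENNReal.ofReal_le_ofReal (radial_bound t ht f hf z hr)) _
  have outer : (∫⁻ r in Set.Ioi (0:ℝ),
      ENNReal.ofReal (‖f z‖ ^ 2 * Real.exp (-(‖z‖ ^ 2) / t) *
        (2 / t * r * Real.exp (-r ^ 2 / t)))) =
      ENNReal.ofReal (‖f z‖ ^ 2 * Real.exp (-(‖z‖ ^ 2) / t)) := by
    set c := ‖f z‖ ^ 2 * Real.exp (-(‖z‖ ^ 2) / t) with hc
    have hint2 : IntegrableOn (fun r : ℝ => c * (2 / t * r * Real.exp (-r ^ 2 / t)))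
        (Set.Ioi 0) := by
      have base : Integrable fun r : ℝ => r * Real.exp (-(1/t) * r ^ 2) :=
        integrable_mul_exp_neg_mul_sq (by positivity)
      have heq : (fun r : ℝ => c * (2 / t * r * Real.exp (-r ^ 2 / t))) =
          fun r : ℝ => (c * (2 / t)) * (r * Real.exp (-(1/t) * r ^ 2)) := by
        funext r
        rw [show -r ^ 2 / t = -(1/t) * r ^ 2 from by ring]
        ring
      rw [heq]
      exact (base.const_mul (c * (2 / t))).integrableOn
    have hnn : 0 ≤ᵐ[volume.restrict (Set.Ioi (0:ℝ))]
        fun r : ℝ => c * (2 / t * r * Real.exp (-r ^ 2 / t)) := by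
      refine (ae_restrict_iff' measurableSet_Ioi).mpr (ae_of_all _ fun r hr => ?_)
      have hr' : (0:ℝ) < r := hr
      have hcnn : 0 ≤ c := by rw [hc]; positivity
      positivity
    rw [← ofReal_integral_eq_lintegral_ofReal hint2 hnn]
    congr 1
    have heq2 : (fun r : ℝ => c * (2 / t * r * Real.exp (-r ^ 2 / t))) =
        fun r : ℝ => (c * (2 / t)) * (r * Real.exp (-r ^ 2 / t)) := by
      funext r; ring
    rw [heq2, MeasureTheory.integral_const_mul, gauss_radial ht]
    field_simp
  have core : ENNReal.ofReal (‖f z‖ ^ 2 * Real.exp (-(‖z‖ ^ 2) / t)) ≤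
      ∫⁻ ω, ENNReal.ofReal (H ω) := by
    rw [step1, step2, ← outer]
    exact lintegral_mono_ae ((ae_restrict_iff' measurableSet_Ioi).mpr
      (ae_of_all _ inner_bound))
  have hA : ENNReal.ofReal (‖f z‖ ^ 2 * Real.exp (-(‖z‖ ^ 2) / t)) ≤
      ENNReal.ofReal (∫ ω, H ω) := by
    rw [ofReal_integral_eq_lintegral_ofReal hint (ae_of_all _ hHnn)]
    exact core
  have hAnn : 0 ≤ ∫ ω, H ω := integral_nonneg hHnn
  have hreal : ‖f z‖ ^ 2 * Real.exp (-(‖z‖ ^ 2) / t) ≤ ∫ ω, H ω :=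
    (ENNReal.ofReal_le_ofReal_iff hAnn).mp hA
  have hprod : Real.exp (-(‖z‖ ^ 2) / t) * Real.exp (‖z‖ ^ 2 / t) = 1 := by
    rw [← Real.exp_add, show -(‖z‖ ^ 2) / t + ‖z‖ ^ 2 / t = 0 from by ring,
      Real.exp_zero]
  calc ‖f z‖ ^ 2
      = (‖f z‖ ^ 2 * Real.exp (-(‖z‖ ^ 2) / t)) *
        Real.exp (‖z‖ ^ 2 / t) := by
        rw [mul_assoc, hprod, mul_one]
    _ ≤ (∫ ω, H ω) * Real.exp (‖z‖ ^ 2 / t) :=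
        mul_le_mul_of_nonneg_right hreal (Real.exp_pos _).le
    _ = Real.exp (‖z‖ ^ 2 / t) * ∫ ω, H ω := mul_comm _ _
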